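/- Let f: S² → S² be a branched covering map admissible for a Sierpiński carpet Z ⊆ S², and J a peripheral circle of Z. Then f⁻¹(J) ∩ Z is contained in a union of finitely many peripheral circles of Z. -/

import Mathlib

open scoped NNReal

noncomputable section

/-- Membership in the standard square Sierpiński `p`-carpet via digit expansions. -/
def SpPair (p : ℕ) (x y : ℝ) : Prop :=
  ∃ a b : ℕ → ℕ,
    (∀ k, a k < p ∧ b k < p ∧ ¬(a k = (p - 1) / 2 ∧ b k = (p - 1) / 2)) ∧
    x = ∑' k : ℕ, (a k : ℝ) / (p : ℝ) ^ (k + 1) ∧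
    y = ∑' k : ℕ, (b k : ℝ) / (p : ℝ) ^ (k + 1)

/-- The standard square Sierpiński `p`-carpet `S_p ⊆ [0,1]²`. -/
def Sp (p : ℕ) : Set (ℝ × ℝ) := {z | SpPair p z.1 z.2}

/-- A Sierpiński carpet: a set homeomorphic to the standard Sierpiński carpet `S₃`. -/
def IsCarpet {X : Type*} [TopologicalSpace X] (Z : Set X) : Prop :=
  Nonempty (↥Z ≃ₜ ↥(Sp 3))

/-- `C` is a peripheral circle of `Z`. -/
def IsPeripheralCircle {X : Type*} [TopologicalSpace X] (Z C : Set X) : Prop :=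
  ∃ x ∉ Z, C = frontier (connectedComponentIn Zᶜ x)

/-- `J` is a Jordan curve: the homeomorphic image of a circle. -/
def IsJordanCurve {X : Type*} [TopologicalSpace X] (J : Set X) : Prop :=
  ∃ φ : (Metric.sphere (0 : EuclideanSpace ℝ (Fin 2)) 1) → X,
    Continuous φ ∧ Function.Injective φ ∧ Set.range φ = J

/-- A Jordan region: an open connected set bounded by a Jordan curve. -/
def IsJordanRegion {X : Type*} [TopologicalSpace X] (U : Set X) : Prop :=
  IsOpen U ∧ IsConnected U ∧ IsJordanCurve (frontier U)

/-- `f` is quasisymmetric on `V`: there is a distortion homeomorphism `η` of `[0,∞)`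
controlling ratios of distances of triples of distinct points of `V`. -/
def QSOn {X : Type*} [MetricSpace X] (f : X → X) (V : Set X) : Prop :=
  ∃ η : ℝ≥0 ≃o ℝ≥0, ∀ x ∈ V, ∀ y ∈ V, ∀ z ∈ V, x ≠ y → x ≠ z → y ≠ z →
    nndist (f x) (f y) / nndist (f x) (f z) ≤ η (nndist x y / nndist x z)

/-- `x ∈ Z` is a good point for `f` and `Z`: there are Jordan regions `V ∋ x` and
`W = f(V)` such that `f|V : V → W` is a quasisymmetric homeomorphism with
`f(V ∩ Z) = W ∩ Z`. -/
def IsGoodPoint {X : Type*} [MetricSpace X] (Z : Set X) (f : X → X) (x : X) : Prop :=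
  ∃ V W : Set X, x ∈ V ∧ IsJordanRegion V ∧ IsJordanRegion W ∧
    f '' V = W ∧ Set.InjOn f V ∧ ContinuousOn f V ∧ QSOn f V ∧
    f '' (V ∩ Z) = W ∩ Z

/-- A branched covering map of the sphere: continuous, open, surjective, finite-to-one. -/
def IsBranchedCovering {X : Type*} [TopologicalSpace X] (f : X → X) : Prop :=
  Continuous f ∧ IsOpenMap f ∧ Function.Surjective f ∧ ∀ y : X, (f ⁻¹' {y}).Finite

/-- `f` is admissible for the Sierpiński carpet `Z`: `f(Z) ⊆ Z` and every point of `Z`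
outside an exceptional set (contained in the union of a finite set and finitely many
peripheral circles) is a good point. -/
def IsAdmissible {X : Type*} [MetricSpace X] (Z : Set X) (f : X → X) : Prop :=
  IsBranchedCovering f ∧ f '' Z ⊆ Z ∧
  ∃ (F : Set X) (𝒞 : Set (Set X)), F.Finite ∧ 𝒞.Finite ∧
    (∀ C ∈ 𝒞, IsPeripheralCircle Z C) ∧
    ∀ x ∈ Z \ (F ∪ ⋃₀ 𝒞), IsGoodPoint Z f x

lemma aux_summable : Summable (fun k : ℕ => (2:ℝ) / 3 ^ (k+1)) := by
  have h := (summable_geometric_of_lt_one (by norm_num : (0:ℝ) ≤ 1/3)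
    (by norm_num : (1/3:ℝ) < 1)).mul_left (2/3 : ℝ)
  refine h.congr fun k => ?_
  rw [one_div, inv_pow, pow_succ]
  field_simp

lemma aux_cont (g : Fin 3 × Fin 3 → ℕ) (hg : ∀ v, g v ≤ 2) :
    Continuous fun q : ℕ → Fin 3 × Fin 3 =>
      ∑' k : ℕ, ((g (q k) : ℝ) / ((3:ℕ):ℝ) ^ (k + 1)) := by
  refine continuous_tsum (f := fun (k : ℕ) (q : ℕ → Fin 3 × Fin 3) =>
      (g (q k) : ℝ) / ((3:ℕ):ℝ) ^ (k + 1)) (u := fun k => (2:ℝ) / 3 ^ (k+1))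
      (fun k => ?_) aux_summable (fun k q => ?_)
  · have h1 : Continuous fun q : ℕ → Fin 3 × Fin 3 => q k := continuous_apply k
    have h2 : Continuous fun v : Fin 3 × Fin 3 => (g v : ℝ) / ((3:ℕ):ℝ) ^ (k + 1) :=
      continuous_of_discreteTopology
    exact h2.comp h1
  · rw [Real.norm_eq_abs, abs_of_nonneg (by positivity)]
    have h3 : ((3:ℕ):ℝ) = (3:ℝ) := by norm_num
    rw [h3]
    have h4 : (g (q k) : ℝ) ≤ 2 := by exact_mod_cast hg (q k)
    have h5 : (0:ℝ) < 3 ^ (k+1) := by positivity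
    exact div_le_div_of_nonneg_right h4 h5.le

lemma aux_isCompact_Sp3 : IsCompact (Sp 3) := by
  classical
  have hKcl : IsClosed {q : ℕ → Fin 3 × Fin 3 |
      ∀ k, ¬(((q k).1 : ℕ) = 1 ∧ ((q k).2 : ℕ) = 1)} := by
    rw [Set.setOf_forall]
    refine isClosed_iInter fun k => ?_
    have h : IsClosed ((fun q : ℕ → Fin 3 × Fin 3 => q k) ⁻¹'
        {v : Fin 3 × Fin 3 | ¬((v.1 : ℕ) = 1 ∧ (v.2 : ℕ) = 1)}) :=
      (isClosed_discrete _).preimage (continuous_apply k)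
    exact h
  have hK : IsCompact {q : ℕ → Fin 3 × Fin 3 |
      ∀ k, ¬(((q k).1 : ℕ) = 1 ∧ ((q k).2 : ℕ) = 1)} := hKcl.isCompact
  have hΦc : Continuous (fun q : ℕ → Fin 3 × Fin 3 =>
      ((∑' k : ℕ, (((q k).1 : ℕ) : ℝ) / ((3:ℕ):ℝ) ^ (k + 1),
        ∑' k : ℕ, (((q k).2 : ℕ) : ℝ) / ((3:ℕ):ℝ) ^ (k + 1)) : ℝ × ℝ)) := by
    refine Continuous.prodMk ?_ ?_
    · exact aux_cont (fun v => (v.1 : ℕ)) (fun v => Nat.lt_succ_iff.mp v.1.isLt)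
    · exact aux_cont (fun v => (v.2 : ℕ)) (fun v => Nat.lt_succ_iff.mp v.2.isLt)
  have himg : Sp 3 = (fun q : ℕ → Fin 3 × Fin 3 =>
      ((∑' k : ℕ, (((q k).1 : ℕ) : ℝ) / ((3:ℕ):ℝ) ^ (k + 1),
        ∑' k : ℕ, (((q k).2 : ℕ) : ℝ) / ((3:ℕ):ℝ) ^ (k + 1)) : ℝ × ℝ)) ''
      {q : ℕ → Fin 3 × Fin 3 | ∀ k, ¬(((q k).1 : ℕ) = 1 ∧ ((q k).2 : ℕ) = 1)} := by
    have h312 : ((3:ℕ) - 1) / 2 = 1 := by norm_num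
    ext z
    constructor
    · rintro ⟨a, b, hab, hx, hy⟩
      refine ⟨fun k => (⟨a k, (hab k).1⟩, ⟨b k, (hab k).2.1⟩), fun k hk => ?_, ?_⟩
      · exact (hab k).2.2 (by rw [h312]; exact hk)
      · refine Prod.ext ?_ ?_
        · rw [hx]
        · rw [hy]
    · rintro ⟨q, hq, rfl⟩
      exact ⟨fun k => ((q k).1 : ℕ), fun k => ((q k).2 : ℕ),
        fun k => ⟨(q k).1.isLt, (q k).2.isLt, by rw [h312]; exact hq k⟩, rfl, rfl⟩
  rw [himg]
  exact hK.image hΦc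

lemma aux_isCompact_of_carpet {X : Type*} [TopologicalSpace X] {Z : Set X}
    (hZ : IsCarpet Z) : IsCompact Z := by
  obtain ⟨e⟩ := hZ
  haveI : CompactSpace (Sp 3) := isCompact_iff_compactSpace.mp aux_isCompact_Sp3
  haveI : CompactSpace Z := e.symm.compactSpace
  exact isCompact_iff_compactSpace.mpr ‹_›

/-- If `f` is a branched covering map of a metric 2-sphere admissible for a Sierpiński
carpet `Z`, and `J` is a peripheral circle of `Z`, then `f⁻¹(J) ∩ Z` is contained in a
union of finitely many peripheral circles of `Z`. -/
theorem stmt13 {X : Type*} [MetricSpace X]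
    (hX : Nonempty (X ≃ₜ Metric.sphere (0 : EuclideanSpace ℝ (Fin 3)) 1))
    (Z : Set X) (hZ : IsCarpet Z)
    (f : X → X) (hf : IsAdmissible Z f)
    (J : Set X) (hJ : IsPeripheralCircle Z J) :
    ∃ 𝒞 : Set (Set X), 𝒞.Finite ∧ (∀ C ∈ 𝒞, IsPeripheralCircle Z C) ∧
      f ⁻¹' J ∩ Z ⊆ ⋃₀ 𝒞 := by
  obtain ⟨e⟩ := hX
  haveI : CompactSpace X := e.symm.compactSpace
  haveI : LocallyConnectedSpace (Metric.sphere (0 : EuclideanSpace ℝ (Fin 3)) 1) :=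
    ChartedSpace.locallyConnectedSpace (EuclideanSpace ℝ (Fin 2)) _
  haveI : LocallyConnectedSpace X := e.locallyConnectedSpace
  obtain ⟨⟨hfc, hfo, hfs, hfin⟩, hfZ, -⟩ := hf
  obtain ⟨x₀, hx₀Z, rfl⟩ := hJ
  have hZcl : IsClosed Z := (aux_isCompact_of_carpet hZ).isClosed
  set U₀ := connectedComponentIn Zᶜ x₀ with hU₀def
  have hx₀c : x₀ ∈ (Zᶜ : Set X) := hx₀Z
  have hU₀sub : U₀ ⊆ Zᶜ := connectedComponentIn_subset _ _
  have hU₀open : IsOpen U₀ := hZcl.isOpen_compl.connectedComponentIn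
  have hx₀U : x₀ ∈ U₀ := mem_connectedComponentIn hx₀c
  set G := f ⁻¹' U₀ with hGdef
  have hGopen : IsOpen G := hU₀open.preimage hfc
  have hGZ : ∀ {z : X}, z ∈ Z → z ∉ G := by
    intro z hz hzG
    exact hU₀sub hzG (hfZ ⟨z, hz, rfl⟩)
  set P := f ⁻¹' {x₀} with hPdef
  have hPfin : P.Finite := hfin x₀
  have hPG : P ⊆ G := by
    intro p hp
    have : f p = x₀ := hp
    show f p ∈ U₀
    rw [this]; exact hx₀U
  -- every connected component of G contains a point of P
  have claimA : ∀ g ∈ G, ∃ p ∈ P, p ∈ connectedComponentIn G g := by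
    intro g hg
    set V := connectedComponentIn G g with hVdef
    have hVopen : IsOpen V := hGopen.connectedComponentIn
    have hVsub : V ⊆ G := connectedComponentIn_subset _ _
    have hgV : g ∈ V := mem_connectedComponentIn hg
    have habs : ∀ c ∈ closure V, c ∈ G → c ∈ V := by
      intro c hc hcG
      have hopen : IsOpen (connectedComponentIn G c) := hGopen.connectedComponentIn
      have hcc : c ∈ connectedComponentIn G c := mem_connectedComponentIn hcG
      obtain ⟨z, hz1, hz2⟩ := mem_closure_iff.mp hc _ hopen hcc
      have e1 : connectedComponentIn G c = connectedComponentIn G z := connectedComponentIn_eq hz1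
      have e2 : connectedComponentIn G g = connectedComponentIn G z := connectedComponentIn_eq hz2
      rw [hVdef, e2, ← e1]
      exact hcc
    have hA'open : IsOpen (f '' V) := hfo _ hVopen
    have hKcl : IsClosed (f '' closure V) :=
      ((isClosed_closure.isCompact).image hfc).isClosed
    have hrev : f '' closure V ∩ U₀ ⊆ f '' V := by
      rintro y ⟨⟨c, hc, rfl⟩, hyU⟩
      exact ⟨c, habs c hc hyU, rfl⟩
    have hU₀pc : IsPreconnected U₀ :=
      (isConnected_connectedComponentIn_iff.mpr hx₀c).isPreconnected
    have hsub : U₀ ⊆ f '' V ∪ (f '' closure V)ᶜ := by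
      intro y hy
      by_cases hyK : y ∈ f '' closure V
      · exact Or.inl (hrev ⟨hyK, hy⟩)
      · exact Or.inr hyK
    have hne1 : (U₀ ∩ f '' V).Nonempty := ⟨f g, hg, ⟨g, hgV, rfl⟩⟩
    have hKall : ¬ (U₀ ∩ (f '' closure V)ᶜ).Nonempty := by
      intro hne2
      obtain ⟨y, -, hy1, hy2⟩ := hU₀pc _ _ hA'open hKcl.isOpen_compl hsub hne1 hne2
      exact hy2 (Set.image_mono subset_closure hy1)
    have hx₀K : x₀ ∈ f '' closure V := by
      by_contra h
      exact hKall ⟨x₀, hx₀U, h⟩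
    obtain ⟨p, hpV, hpf⟩ := hrev ⟨hx₀K, hx₀U⟩
    exact ⟨p, hpf, hpV⟩
  have hGunion : G ⊆ ⋃ p ∈ P, connectedComponentIn G p := by
    intro g hg
    obtain ⟨p, hpP, hpV⟩ := claimA g hg
    have heq : connectedComponentIn G g = connectedComponentIn G p := connectedComponentIn_eq hpV
    exact Set.mem_biUnion hpP (heq ▸ mem_connectedComponentIn hg)
  refine ⟨(fun p => frontier (connectedComponentIn Zᶜ p)) '' P, hPfin.image _, ?_, ?_⟩
  · rintro C ⟨p, hpP, rfl⟩
    exact ⟨p, fun hpZ => hGZ hpZ (hPG hpP), rfl⟩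
  · rintro x ⟨hxJ, hxZ⟩
    have hxG : x ∈ closure G := by
      have h1 : x ∈ f ⁻¹' closure U₀ := frontier_subset_closure hxJ
      exact hfo.preimage_closure_subset_closure_preimage h1
    have hsub2 : closure G ⊆ ⋃ p ∈ P, closure (connectedComponentIn G p) := by
      calc closure G ⊆ closure (⋃ p ∈ P, connectedComponentIn G p) := closure_mono hGunion
        _ = ⋃ p ∈ P, closure (connectedComponentIn G p) := hPfin.closure_biUnion _
    obtain ⟨p, hpP, hxp⟩ := Set.mem_iUnion₂.mp (hsub2 hxG)
    have hpG : p ∈ G := hPG hpP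
    have hcomp : connectedComponentIn G p ⊆ connectedComponentIn Zᶜ p :=
      (isConnected_connectedComponentIn_iff.mpr hpG).isPreconnected.subset_connectedComponentIn
        (mem_connectedComponentIn hpG)
        (fun y hy hyZ => hGZ hyZ (connectedComponentIn_subset _ _ hy))
    refine Set.mem_sUnion.mpr ⟨_, ⟨p, hpP, rfl⟩, ?_, ?_⟩
    · exact closure_mono hcomp hxp
    · exact fun h => (connectedComponentIn_subset Zᶜ p (interior_subset h)) hxZ
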